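/- Let Y^(1),…,Y^(N) be multi-object trajectories with L = Σ_{n=1}^N |Y^(n)| ≥ 1, and let p > 0. Assume that for every j ≥ L and every n, κ(j, |Y^(n)|) = κ̄(j) depends only on j, and that κ̄(j+1) − κ̄(j) ≤ κ̄(L)/L for all j ≥ L. Then every r-th order Fréchet mean of Y^(1),…,Y^(N) has cardinality at most L: if Ŷ is a finite multiset of trajectories with Σ_{n=1}^N d(Ŷ, Y^(n))^r ≤ Σ_{n=1}^N d(X, Y^(n))^r for every finite multiset X of trajectories, then |Ŷ| ≤ L. -/

import Mathlib

open scoped BigOperators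

/-- A trajectory on the time window `{1,…,K}` (modeled as `Fin K`): a domain together
with a state map (values outside the domain are irrelevant). -/
structure Traj (K : ℕ) (X : Type*) where
  dom : Finset (Fin K)
  toFun : Fin K → X

/-- Per-time cost `e_{u,v}(k)` with base metric cut off at `c`. -/
noncomputable def ecost {K : ℕ} {X : Type*} [MetricSpace X] (c : ℝ) (u v : Traj K X)
    (k : Fin K) : ℝ :=
  if k ∈ u.dom ∩ v.dom then min (dist (u.toFun k) (v.toFun k)) c
  else if k ∈ u.dom ∪ v.dom then c
  else 0

/-- OSPA trajectory distance of order `r` and cut-off `c`. -/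
noncomputable def dT {K : ℕ} {X : Type*} [MetricSpace X] (c r : ℝ) (u v : Traj K X) : ℝ :=
  if u.dom ∪ v.dom = ∅ then 0
  else ((∑ k ∈ u.dom ∪ v.dom, ecost c u v k ^ r) / ((u.dom ∪ v.dom).card : ℝ)) ^ (1 / r)

/-- OSPA-based multi-object trajectory distance of order `r`, cardinality penalty `p`,
cut-off `c` and normalization `κ`.  The minimum over permutations of an enumeration of
the larger multiset is realized as the infimum, over all lists `l` of pairs whose first
components enumerate the smaller multiset and whose second components form a
sub-multiset of the larger one, of the normalized total cost. -/
noncomputable def dMOT {K : ℕ} {X : Type*} [MetricSpace X] (κ : ℕ → ℕ → ℝ)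
    (p c r : ℝ) (A B : Multiset (Traj K X)) : ℝ :=
  (sInf { q : ℝ | ∃ l : List (Traj K X × Traj K X),
      (↑(l.map Prod.fst) : Multiset (Traj K X)) = (if A.card ≤ B.card then A else B) ∧
      (↑(l.map Prod.snd) : Multiset (Traj K X)) ≤ (if A.card ≤ B.card then B else A) ∧
      q = ((l.map fun e => dT c r e.1 e.2 ^ r).sum
            + ((max A.card B.card - min A.card B.card : ℕ) : ℝ) * p ^ r)
          / κ (max A.card B.card) (min A.card B.card) }) ^ (1 / r)
section Aux

variable {K : ℕ} {X : Type*} [MetricSpace X]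

lemma my_ecost_nonneg {c : ℝ} (hc : 0 ≤ c) (u v : Traj K X) (k : Fin K) :
    0 ≤ ecost c u v k := by
  unfold ecost
  split_ifs with h1 h2
  · exact le_min dist_nonneg hc
  · exact hc
  · exact le_rfl

lemma my_dT_nonneg {c r : ℝ} (hc : 0 ≤ c) (u v : Traj K X) : 0 ≤ dT c r u v := by
  unfold dT
  split_ifs with h
  · exact le_rfl
  · apply Real.rpow_nonneg
    apply div_nonneg _ (Nat.cast_nonneg _)
    exact Finset.sum_nonneg fun k _ => Real.rpow_nonneg (my_ecost_nonneg hc u v k) r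

lemma my_dT_self {c r : ℝ} (hc : 0 ≤ c) (hr : r ≠ 0) (u : Traj K X) : dT c r u u = 0 := by
  unfold dT
  split_ifs with h
  · rfl
  · have : ∀ k ∈ u.dom ∪ u.dom, ecost c u u k ^ r = 0 := by
      intro k hk
      have hk' : k ∈ u.dom := by simpa using hk
      have : ecost c u u k = 0 := by
        unfold ecost
        have : k ∈ u.dom ∩ u.dom := by simpa using hk'
        rw [if_pos this, dist_self]
        exact min_eq_left hc
      rw [this]
      exact Real.zero_rpow hr
    rw [Finset.sum_eq_zero this, zero_div]
    exact Real.zero_rpow (by simpa using hr)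

/-- The set whose infimum (raised to `1/r`) defines `dMOT`. -/
def costSet (κ : ℕ → ℕ → ℝ) (p c r : ℝ) (A B : Multiset (Traj K X)) : Set ℝ :=
  { q : ℝ | ∃ l : List (Traj K X × Traj K X),
      (↑(l.map Prod.fst) : Multiset (Traj K X)) = (if A.card ≤ B.card then A else B) ∧
      (↑(l.map Prod.snd) : Multiset (Traj K X)) ≤ (if A.card ≤ B.card then B else A) ∧
      q = ((l.map fun e => dT c r e.1 e.2 ^ r).sum
            + ((max A.card B.card - min A.card B.card : ℕ) : ℝ) * p ^ r)
          / κ (max A.card B.card) (min A.card B.card) }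

lemma dMOT_def (κ : ℕ → ℕ → ℝ) (p c r : ℝ) (A B : Multiset (Traj K X)) :
    dMOT κ p c r A B = sInf (costSet κ p c r A B) ^ (1 / r) := rfl

lemma exists_pairing (A B : Multiset (Traj K X)) (h : A.card ≤ B.card) :
    ∃ l : List (Traj K X × Traj K X),
      (↑(l.map Prod.fst) : Multiset (Traj K X)) = A ∧
      (↑(l.map Prod.snd) : Multiset (Traj K X)) ≤ B := by
  refine ⟨A.toList.zip (B.toList.take A.card), ?_, ?_⟩
  · rw [List.map_fst_zip]
    · exact Multiset.coe_toList A
    · rw [Multiset.length_toList, List.length_take, Multiset.length_toList]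
      exact le_min le_rfl h
  · rw [List.map_snd_zip]
    · calc (↑(B.toList.take A.card) : Multiset (Traj K X)) ≤ ↑B.toList := by
            exact Multiset.coe_le.mpr (List.Sublist.subperm (List.take_sublist _ _))
        _ = B := Multiset.coe_toList B
    · rw [Multiset.length_toList, List.length_take, Multiset.length_toList]
      exact min_le_left _ _

lemma costSet_nonempty (κ : ℕ → ℕ → ℝ) (p c r : ℝ) (A B : Multiset (Traj K X)) :
    (costSet κ p c r A B).Nonempty := by
  by_cases h : A.card ≤ B.card
  · obtain ⟨l, h1, h2⟩ := exists_pairing A B h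
    exact ⟨_, l, by rw [if_pos h]; exact h1, by rw [if_pos h]; exact h2, rfl⟩
  · obtain ⟨l, h1, h2⟩ := exists_pairing B A (le_of_not_ge h)
    exact ⟨_, l, by rw [if_neg h]; exact h1, by rw [if_neg h]; exact h2, rfl⟩

lemma costSet_nonneg {κ : ℕ → ℕ → ℝ} {p c r : ℝ} (hκ : ∀ s m, 0 < κ s m)
    (hc : 0 ≤ c) (hp : 0 ≤ p) (A B : Multiset (Traj K X)) :
    ∀ q ∈ costSet κ p c r A B, 0 ≤ q := by
  rintro q ⟨l, -, -, rfl⟩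
  apply div_nonneg _ (hκ _ _).le
  apply add_nonneg
  · apply List.sum_nonneg
    intro x hx
    obtain ⟨e, -, rfl⟩ := List.mem_map.mp hx
    exact Real.rpow_nonneg (my_dT_nonneg hc _ _) r
  · exact mul_nonneg (Nat.cast_nonneg _) (Real.rpow_nonneg hp r)

lemma dMOT_rpow {κ : ℕ → ℕ → ℝ} {p c r : ℝ} (hκ : ∀ s m, 0 < κ s m)
    (hc : 0 ≤ c) (hp : 0 ≤ p) (hr : r ≠ 0) (A B : Multiset (Traj K X)) :
    dMOT κ p c r A B ^ r = sInf (costSet κ p c r A B) := by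
  rw [dMOT_def]
  have h0 : 0 ≤ sInf (costSet κ p c r A B) :=
    Real.sInf_nonneg (costSet_nonneg hκ hc hp A B)
  rw [← Real.rpow_mul h0, one_div_mul_cancel hr, Real.rpow_one]

lemma card_finsetSum {ι : Type*} (s : Finset ι) (f : ι → Multiset (Traj K X)) :
    (∑ i ∈ s, f i).card = ∑ i ∈ s, (f i).card := by
  classical
  induction s using Finset.induction_on with
  | empty => simp
  | @insert a s h ih => simp [Finset.sum_insert h, ih]

end Aux


/-- Cardinality bound on Fréchet means of multi-object trajectories: under the stated
assumptions on `κ`, every `r`-th order Fréchet mean of `Y^(1),…,Y^(N)` has cardinality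
at most `L = Σ_n |Y^(n)|`. -/
theorem frechet_mean_card_le {K N : ℕ} {X : Type*} [MetricSpace X]
    (hK : 1 ≤ K) (hN : 1 ≤ N) {c r p : ℝ} (hc : 0 < c) (hr : 1 ≤ r) (hp : 0 < p)
    (κ : ℕ → ℕ → ℝ) (hκpos : ∀ s m, 0 < κ s m) (hκsym : ∀ s m, κ s m = κ m s)
    (Y : Fin N → Multiset (Traj K X)) (L : ℕ) (hL : L = ∑ n, (Y n).card) (hL1 : 1 ≤ L)
    (κbar : ℕ → ℝ)
    (hκbar : ∀ j, L ≤ j → ∀ n : Fin N, κ j (Y n).card = κbar j)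
    (hκincr : ∀ j, L ≤ j → κbar (j + 1) - κbar j ≤ κbar L / (L : ℝ))
    (Yhat : Multiset (Traj K X))
    (hmin : ∀ Z : Multiset (Traj K X),
      ∑ n, dMOT κ p c r Yhat (Y n) ^ r ≤ ∑ n, dMOT κ p c r Z (Y n) ^ r) :
    Yhat.card ≤ L := by

  by_contra hcon
  push_neg at hcon
  have hr0 : r ≠ 0 := by positivity
  set s := Yhat.card with hs
  have hmle : ∀ n, (Y n).card ≤ L := by
    intro n
    rw [hL]
    exact Finset.single_le_sum (f := fun i => (Y i).card) (fun i _ => Nat.zero_le _)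
      (Finset.mem_univ n)
  set Z : Multiset (Traj K X) := ∑ n, Y n with hZdef
  have hZcard : Z.card = L := by rw [hZdef, card_finsetSum, hL]
  have hYleZ : ∀ n, Y n ≤ Z := by
    intro n
    rw [hZdef]
    exact Finset.single_le_sum (f := Y) (fun i _ => Multiset.zero_le _) (Finset.mem_univ n)
  have n0 : Fin N := ⟨0, hN⟩
  have hκbarpos : ∀ j, L ≤ j → 0 < κbar j := by
    intro j hj
    rw [← hκbar j hj n0]
    exact hκpos _ _
  have hLpos : 0 < (L : ℝ) := by exact_mod_cast hL1
  -- growth bound: κbar (L + k) ≤ κbar L * (L + k) / L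
  have hgrow : ∀ k : ℕ, κbar (L + k) ≤ κbar L * ((L : ℝ) + k) / L := by
    intro k
    induction k with
    | zero =>
      simp only [Nat.add_zero, Nat.cast_zero, add_zero]
      rw [mul_div_assoc, div_self hLpos.ne', mul_one]
    | succ k ih =>
      have h1 := hκincr (L + k) (Nat.le_add_right _ _)
      have key : κbar L * ((L : ℝ) + ((k + 1 : ℕ) : ℝ)) / (L : ℝ)
          = κbar L * ((L : ℝ) + (k : ℝ)) / (L : ℝ) + κbar L / (L : ℝ) := by
        push_cast
        field_simp
        ring
      have e1 : L + (k + 1) = (L + k) + 1 := by omega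
      have h2 : κbar (L + (k + 1)) ≤ κbar (L + k) + κbar L / L := by
        rw [e1]; linarith
      rw [key]
      linarith
  have hsgrow : κbar s ≤ κbar L * (s : ℝ) / L := by
    have : s = L + (s - L) := by omega
    rw [this]
    have := hgrow (s - L)
    have hcast : ((L : ℝ) + ((s - L : ℕ) : ℝ)) = ((L + (s - L) : ℕ) : ℝ) := by push_cast; ring
    rw [hcast] at this
    exact this
  have hκs : 0 < κbar s := hκbarpos s (le_of_lt hcon)
  have hκL : 0 < κbar L := hκbarpos L le_rfl
  have hP : 0 < p ^ r := Real.rpow_pos_of_pos hp r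
  -- lower bound for Yhat terms
  have hlow : ∀ n : Fin N, ((s - (Y n).card : ℕ) : ℝ) * p ^ r / κbar s
      ≤ dMOT κ p c r Yhat (Y n) ^ r := by
    intro n
    rw [dMOT_rpow hκpos hc.le hp.le hr0]
    apply le_csInf (costSet_nonempty κ p c r Yhat (Y n))
    rintro q ⟨l, -, -, rfl⟩
    have hcards : ¬ (Yhat.card ≤ (Y n).card) := by
      intro h; exact absurd (le_trans h (hmle n)) (not_le.mpr hcon)
    have hmax : max Yhat.card (Y n).card = s := max_eq_left (le_of_not_ge hcards)
    have hmin' : min Yhat.card (Y n).card = (Y n).card := min_eq_right (le_of_not_ge hcards)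
    rw [hmax, hmin', hκbar s (le_of_lt hcon) n]
    rw [div_le_div_iff_of_pos_right hκs]
    have : 0 ≤ (l.map fun e => dT c r e.1 e.2 ^ r).sum := by
      apply List.sum_nonneg
      intro x hx
      obtain ⟨e, -, rfl⟩ := List.mem_map.mp hx
      exact Real.rpow_nonneg (my_dT_nonneg hc.le _ _) r
    linarith
  -- upper bound for Z terms
  have hub : ∀ n : Fin N, dMOT κ p c r Z (Y n) ^ r
      ≤ ((L - (Y n).card : ℕ) : ℝ) * p ^ r / κbar L := by
    intro n
    rw [dMOT_rpow hκpos hc.le hp.le hr0]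
    have hbdd : BddBelow (costSet κ p c r Z (Y n)) :=
      ⟨0, fun q hq => costSet_nonneg hκpos hc.le hp.le Z (Y n) q hq⟩
    have hmem : ((L - (Y n).card : ℕ) : ℝ) * p ^ r / κbar L ∈ costSet κ p c r Z (Y n) := by
      refine ⟨(Y n).toList.map (fun y => (y, y)), ?_, ?_, ?_⟩
      · have hfst : (((Y n).toList.map (fun y => (y, y))).map Prod.fst) = (Y n).toList := by
          simp [List.map_map, Function.comp_def]
        rw [hfst, Multiset.coe_toList]
        by_cases h : Z.card ≤ (Y n).card
        · rw [if_pos h]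
          have : Z = Y n := by
            refine (Multiset.eq_of_le_of_card_le (hYleZ n) ?_).symm
            exact h
          rw [this]
        · rw [if_neg h]
      · have hsnd : (((Y n).toList.map (fun y => (y, y))).map Prod.snd) = (Y n).toList := by
          simp [List.map_map, Function.comp_def]
        rw [hsnd, Multiset.coe_toList]
        by_cases h : Z.card ≤ (Y n).card
        · rw [if_pos h]
        · rw [if_neg h]; exact hYleZ n
      · have hzero : ((((Y n).toList.map (fun y => (y, y))).map
            fun e => dT c r e.1 e.2 ^ r)).sum = 0 := by
          apply List.sum_eq_zero
          intro x hx
          obtain ⟨e, he, rfl⟩ := List.mem_map.mp hx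
          obtain ⟨y, -, rfl⟩ := List.mem_map.mp he
          rw [my_dT_self hc.le hr0]
          exact Real.zero_rpow hr0
        rw [hzero, zero_add]
        have h1 : max Z.card (Y n).card = L := by
          rw [hZcard]; exact max_eq_left (hmle n)
        have h2 : min Z.card (Y n).card = (Y n).card := by
          rw [hZcard]; exact min_eq_right (hmle n)
        rw [h1, h2, hκbar L le_rfl n]
    exact csInf_le hbdd hmem
  -- sum the bounds
  have hsum1 : (∑ n : Fin N, ((s - (Y n).card : ℕ) : ℝ) * p ^ r / κbar s)
      ≤ ∑ n, dMOT κ p c r Yhat (Y n) ^ r := Finset.sum_le_sum fun n _ => hlow n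
  have hsum2 : (∑ n, dMOT κ p c r Z (Y n) ^ r)
      ≤ ∑ n : Fin N, ((L - (Y n).card : ℕ) : ℝ) * p ^ r / κbar L :=
    Finset.sum_le_sum fun n _ => hub n
  have hchain := le_trans (le_trans hsum1 (hmin Z)) hsum2
  -- compute both sums
  have hcast1 : ∀ n : Fin N, ((s - (Y n).card : ℕ) : ℝ) = (s : ℝ) - ((Y n).card : ℝ) := by
    intro n; rw [Nat.cast_sub (le_trans (hmle n) (le_of_lt hcon))]
  have hcast2 : ∀ n : Fin N, ((L - (Y n).card : ℕ) : ℝ) = (L : ℝ) - ((Y n).card : ℝ) := by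
    intro n; rw [Nat.cast_sub (hmle n)]
  have hLsum : (∑ n : Fin N, ((Y n).card : ℝ)) = (L : ℝ) := by
    rw [hL]; push_cast; ring
  have hS1 : (∑ n : Fin N, ((s - (Y n).card : ℕ) : ℝ) * p ^ r / κbar s)
      = ((N : ℝ) * s - L) * p ^ r / κbar s := by
    rw [← Finset.sum_div, ← Finset.sum_mul]
    congr 2
    calc (∑ n : Fin N, ((s - (Y n).card : ℕ) : ℝ))
        = ∑ n : Fin N, ((s : ℝ) - ((Y n).card : ℝ)) := Finset.sum_congr rfl fun n _ => hcast1 n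
      _ = (N : ℝ) * s - L := by
          rw [Finset.sum_sub_distrib, hLsum, Finset.sum_const, Finset.card_univ,
            Fintype.card_fin, nsmul_eq_mul]
  have hS2 : (∑ n : Fin N, ((L - (Y n).card : ℕ) : ℝ) * p ^ r / κbar L)
      = ((N : ℝ) * L - L) * p ^ r / κbar L := by
    rw [← Finset.sum_div, ← Finset.sum_mul]
    congr 2
    calc (∑ n : Fin N, ((L - (Y n).card : ℕ) : ℝ))
        = ∑ n : Fin N, ((L : ℝ) - ((Y n).card : ℝ)) := Finset.sum_congr rfl fun n _ => hcast2 n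
      _ = (N : ℝ) * L - L := by
          rw [Finset.sum_sub_distrib, hLsum, Finset.sum_const, Finset.card_univ,
            Fintype.card_fin, nsmul_eq_mul]
  rw [hS1, hS2] at hchain
  -- derive the contradiction
  have hNR : (1 : ℝ) ≤ (N : ℝ) := by exact_mod_cast hN
  have hsR : (L : ℝ) + 1 ≤ (s : ℝ) := by exact_mod_cast hcon
  have h1 : ((N : ℝ) * s - L) * p ^ r * κbar L ≤ ((N : ℝ) * L - L) * p ^ r * κbar s := by
    exact (div_le_div_iff₀ hκs hκL).mp hchain
  have h2 : ((N : ℝ) * L - L) * p ^ r * κbar s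
      ≤ ((N : ℝ) * L - L) * p ^ r * (κbar L * (s : ℝ) / L) := by
    apply mul_le_mul_of_nonneg_left hsgrow
    apply mul_nonneg _ hP.le
    nlinarith
  have h3 := le_trans h1 h2
  have h4 : ((N : ℝ) * s - L) * p ^ r * κbar L * L
      ≤ ((N : ℝ) * L - L) * p ^ r * κbar L * s := by
    have := mul_le_mul_of_nonneg_right h3 hLpos.le
    calc ((N : ℝ) * s - L) * p ^ r * κbar L * L
        ≤ ((N : ℝ) * L - L) * p ^ r * (κbar L * (s : ℝ) / L) * L := this
      _ = ((N : ℝ) * L - L) * p ^ r * κbar L * s := by field_simp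
  nlinarith [mul_pos hP hκL, mul_pos hLpos (mul_pos hP hκL)]
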